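/- arXiv:1801.05246 — 3 statements merged into one kernel-verified Lean document; each statement's English description precedes it below -/
import Mathlib

section
/- Let G be a connected simple graph on V vertices with E edges and first Betti number β = E - V + 1. For any eigenvector f of L(G) that is nowhere zero, the number of nodal domains ν(f) (connected components of the graph obtained from G by deleting all edges (i,j) with f(i)f(j) < 0) and the flip count μ(f) = #{(i,j) ∈ E : f(i)f(j) < 0} satisfy μ(f) ≥ ν(f) - 1 and μ(f) ≤ ν(f) - 1 + β. -/
/-- The graph obtained from `G` by deleting all edges across which `f` changes sign
(for nowhere-zero `f`, the surviving edges are exactly those with `f x * f y > 0`).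
Its connected components are the nodal domains of `f`. -/
def signGraph {α : Type*} (G : SimpleGraph α) (f : α → ℝ) : SimpleGraph α where
  Adj x y := G.Adj x y ∧ 0 < f x * f y
  symm := ⟨fun x y h => ⟨h.1.symm, by rw [mul_comm]; exact h.2⟩⟩
  loopless := ⟨fun x h => G.loopless.irrefl x h.1⟩

/-- The nodal count `ν(f)`: the number of connected components after deleting all
sign-change edges. -/
noncomputable def nodalCount {α : Type*} (G : SimpleGraph α) (f : α → ℝ) : ℕ :=
  Nat.card (signGraph G f).ConnectedComponent

open scoped Classical in
/-- The flip count `μ(f)`: the number of (undirected) edges of `G` across which `f`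
changes sign. -/
noncomputable def flipCount {α : Type*} [Fintype α] (G : SimpleGraph α) (f : α → ℝ) : ℕ :=
  (G.edgeFinset.filter
    (fun e => Sym2.lift ⟨fun x y => f x * f y < 0, fun x y => by simp [mul_comm]⟩ e)).card


open SimpleGraph

private lemma reach_del {α : Type*} (G : SimpleGraph α) (x y : α) {u v : α} (w : G.Walk u v) :
    (G.deleteEdges {s(x,y)}).Reachable u v ∨
    ((G.deleteEdges {s(x,y)}).Reachable u x ∧ (G.deleteEdges {s(x,y)}).Reachable y v) ∨
    ((G.deleteEdges {s(x,y)}).Reachable u y ∧ (G.deleteEdges {s(x,y)}).Reachable x v) := by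
  set G' := G.deleteEdges {s(x,y)} with hG'
  induction w with
  | nil => exact Or.inl (Reachable.refl _)
  | @cons a b c hab p ih =>
    by_cases he : s(a, b) = s(x, y)
    · rw [Sym2.eq_iff] at he
      rcases he with ⟨rfl, rfl⟩ | ⟨rfl, rfl⟩
      · -- a = x, b = y
        rcases ih with h | ⟨h1, h2⟩ | ⟨h1, h2⟩
        · exact Or.inr (Or.inl ⟨Reachable.refl _, h⟩)
        · exact Or.inr (Or.inl ⟨Reachable.refl _, h2⟩)
        · exact Or.inl h2
      · -- a = y, b = x
        rcases ih with h | ⟨h1, h2⟩ | ⟨h1, h2⟩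
        · exact Or.inr (Or.inr ⟨Reachable.refl _, h⟩)
        · exact Or.inl h2
        · exact Or.inr (Or.inr ⟨Reachable.refl _, h2⟩)
    · have hab' : G'.Adj a b := by
        rw [hG', SimpleGraph.deleteEdges_adj]
        exact ⟨hab, by simpa using he⟩
      have hr : G'.Reachable a b := hab'.reachable
      rcases ih with h | ⟨h1, h2⟩ | ⟨h1, h2⟩
      · exact Or.inl (hr.trans h)
      · exact Or.inr (Or.inl ⟨hr.trans h1, h2⟩)
      · exact Or.inr (Or.inr ⟨hr.trans h1, h2⟩)

private lemma card_comp_del_le {α : Type*} [Finite α] (G : SimpleGraph α) (e : Sym2 α) :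
    Nat.card (G.deleteEdges {e}).ConnectedComponent ≤ Nat.card G.ConnectedComponent + 1 := by
  classical
  induction e with
  | _ x y =>
  set G' := G.deleteEdges {s(x,y)} with hG'
  have hle : G' ≤ G := SimpleGraph.deleteEdges_le _
  let φ : G' →g G := SimpleGraph.Hom.ofLE hle
  let F : G'.ConnectedComponent → G.ConnectedComponent ⊕ Unit := fun c =>
    if c = G'.connectedComponentMk y then Sum.inr () else Sum.inl (c.map φ)
  have hinj : Function.Injective F := by
    intro c1 c2 h
    by_cases h1 : c1 = G'.connectedComponentMk y
    · by_cases h2 : c2 = G'.connectedComponentMk y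
      · exact h1.trans h2.symm
      · simp only [F, if_pos h1, if_neg h2] at h; exact absurd h (by simp)
    · by_cases h2 : c2 = G'.connectedComponentMk y
      · simp only [F, if_neg h1, if_pos h2] at h; exact absurd h (by simp)
      · simp only [F, if_neg h1, if_neg h2, Sum.inl.injEq] at h
        revert h1 h2 h
        refine c1.ind fun u => c2.ind fun v => ?_
        intro h1 h2 h
        simp only [SimpleGraph.ConnectedComponent.map_mk] at h
        have hreach : G.Reachable u v := SimpleGraph.ConnectedComponent.eq.mp h
        obtain ⟨w⟩ := hreach
        rcases reach_del G x y w with hr | ⟨ha, hb⟩ | ⟨ha, hb⟩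
        · exact SimpleGraph.ConnectedComponent.sound hr
        · exact absurd (SimpleGraph.ConnectedComponent.sound hb.symm) h2
        · exact absurd (SimpleGraph.ConnectedComponent.sound ha) h1
  calc Nat.card G'.ConnectedComponent ≤ Nat.card (G.ConnectedComponent ⊕ Unit) :=
        Nat.card_le_card_of_injective F hinj
    _ = Nat.card G.ConnectedComponent + 1 := by simp [Nat.card_sum]

private lemma card_comp_delset_le {α : Type*} [Finite α] (G : SimpleGraph α)
    (hconn : G.Connected) (S : Finset (Sym2 α)) :
    Nat.card (G.deleteEdges ↑S).ConnectedComponent ≤ S.card + 1 := by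
  classical
  induction S using Finset.induction_on with
  | empty =>
    simp only [Finset.coe_empty, SimpleGraph.deleteEdges_empty, Finset.card_empty]
    have : Subsingleton G.ConnectedComponent := by
      constructor
      refine fun c1 c2 => c1.ind fun u => c2.ind fun v => ?_
      exact SimpleGraph.ConnectedComponent.sound (hconn.preconnected u v)
    have hα : Nonempty α := hconn.nonempty
    have hne : Nonempty G.ConnectedComponent :=
      ⟨G.connectedComponentMk (Classical.arbitrary _)⟩
    have := Nat.card_eq_one_iff_unique.mpr ⟨this, hne⟩
    omega
  | @insert e S he ih =>
    have : G.deleteEdges ↑(insert e S) = (G.deleteEdges ↑S).deleteEdges {e} := by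
      rw [SimpleGraph.deleteEdges_deleteEdges]
      congr 1
      simp [Set.union_comm]
    rw [this, Finset.card_insert_of_notMem he]
    calc Nat.card ((G.deleteEdges ↑S).deleteEdges {e}).ConnectedComponent
        ≤ Nat.card (G.deleteEdges ↑S).ConnectedComponent + 1 := card_comp_del_le _ _
      _ ≤ S.card + 1 + 1 := by omega

private lemma card_le_comp_add_edges {α : Type*} [Fintype α] :
    ∀ (n : ℕ) (H : SimpleGraph α), H.edgeSet.ncard = n →
      Fintype.card α ≤ Nat.card H.ConnectedComponent + n := by
  classical
  intro n
  induction n with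
  | zero =>
    intro H h0
    have hfin : H.edgeSet.Finite := Set.toFinite _
    have : H.edgeSet = ∅ := by
      rwa [Set.ncard_eq_zero hfin] at h0
    have hbot : H = ⊥ := SimpleGraph.edgeSet_eq_empty.mp this
    subst hbot
    have : Function.Bijective ((⊥ : SimpleGraph α).connectedComponentMk) := by
      constructor
      · intro u v h
        exact SimpleGraph.reachable_bot.mp (SimpleGraph.ConnectedComponent.eq.mp h)
      · intro c; exact c.exists_rep
    have := Nat.card_eq_of_bijective _ this
    rw [Nat.card_eq_fintype_card] at this
    omega
  | succ n ih =>
    intro H h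
    have hne : H.edgeSet.Nonempty := by
      rw [Set.nonempty_iff_ne_empty]
      intro hc
      rw [hc, Set.ncard_empty] at h
      omega
    obtain ⟨e, he⟩ := hne
    have hcard : (H.deleteEdges {e}).edgeSet.ncard = n := by
      rw [SimpleGraph.edgeSet_deleteEdges]
      rw [Set.ncard_diff_singleton_of_mem he]
      omega
    have h1 := ih (H.deleteEdges {e}) hcard
    have h2 := card_comp_del_le H e
    omega

open scoped Classical in
/-- For a connected simple graph `G` with first Betti number
`β = E - V + 1` and any nowhere-zero Laplacian eigenvector `f`, the flip count and
nodal count satisfy `ν(f) - 1 ≤ μ(f) ≤ ν(f) - 1 + β`. -/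
theorem flip_count_nodal_count_bounds
    {α : Type*} [Fintype α] [DecidableEq α] (G : SimpleGraph α) [DecidableRel G.Adj]
    (hconn : G.Connected)
    (f : α → ℝ) (hf : f ≠ 0) (lam : ℝ)
    (heig : (G.lapMatrix ℝ).mulVec f = lam • f)
    (hnz : ∀ i, f i ≠ 0) :
    (nodalCount G f : ℤ) - 1 ≤ (flipCount G f : ℤ) ∧
    (flipCount G f : ℤ) ≤ (nodalCount G f : ℤ) - 1 +
      ((G.edgeFinset.card : ℤ) - (Fintype.card α : ℤ) + 1) := by
  classical
  set P : Sym2 α → Prop :=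
    Sym2.lift ⟨fun x y => f x * f y < 0, fun x y => by simp [mul_comm]⟩ with hP
  set S : Finset (Sym2 α) := G.edgeFinset.filter P with hS
  have hflip : flipCount G f = S.card := by
    rw [flipCount]
    congr 1
    ext e
    simp only [Finset.mem_filter, SimpleGraph.mem_edgeFinset, hS, hP]
  have hHS : signGraph G f = G.deleteEdges ↑S := by
    ext x y
    simp only [signGraph, SimpleGraph.deleteEdges_adj, hS, Finset.coe_filter,
      Set.mem_setOf_eq, SimpleGraph.mem_edgeFinset, SimpleGraph.mem_edgeSet, hP,
      Sym2.lift_mk, not_and]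
    constructor
    · rintro ⟨ha, hpos⟩
      exact ⟨ha, fun _ => not_lt.mpr hpos.le⟩
    · rintro ⟨ha, hn⟩
      refine ⟨ha, ?_⟩
      rcases (mul_ne_zero (hnz x) (hnz y)).lt_or_gt with h | h
      · exact absurd h (hn ha)
      · exact h
  -- lower bound
  have hlow : nodalCount G f ≤ S.card + 1 := by
    rw [nodalCount, hHS]
    exact card_comp_delset_le G hconn S
  -- upper bound
  have hSsub : ↑S ⊆ G.edgeSet := by
    intro e he
    rw [hS] at he
    simp only [Finset.coe_filter, Set.mem_setOf_eq, SimpleGraph.mem_edgeFinset] at he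
    exact he.1
  have hedges : (signGraph G f).edgeSet.ncard = G.edgeFinset.card - S.card := by
    rw [hHS, SimpleGraph.edgeSet_deleteEdges,
      Set.ncard_diff hSsub (Set.toFinite _), Set.ncard_coe_finset]
    congr 1
    rw [SimpleGraph.edgeFinset, Set.ncard_eq_toFinset_card']
  have hScard : S.card ≤ G.edgeFinset.card := Finset.card_le_card (Finset.filter_subset _ _)
  have hup := card_le_comp_add_edges ((signGraph G f).edgeSet.ncard) (signGraph G f) rfl
  rw [hedges] at hup
  rw [← nodalCount] at hup
  constructor
  · rw [hflip]; omega
  · rw [hflip]; omega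
end

section
/- Let G be a simple graph with a 1-leaf-pair a, b adjacent to u, let Ḡ be obtained by adding edge (a,b), and let f be an eigenvector of L(G) with simple eigenvalue λ ∉ {1,3} and f nowhere zero. Then the flip count of f on Ḡ equals the flip count of f on G: f does not change sign across the added edge (a,b). -/
/-- The real graph Laplacian `D - A`, with classical decidability of adjacency. -/
noncomputable def lapR {α : Type*} [Fintype α] [DecidableEq α] (G : SimpleGraph α) :
    Matrix α α ℝ :=
  letI := Classical.decRel G.Adj
  G.lapMatrix ℝ

/-- If `a`, `b` form a 1-leaf-pair attached to `u` in `G`, `Ḡ` adds the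
edge `(a,b)`, and `f` is a nowhere-zero eigenvector of `L(G)` with simple eigenvalue
`lam ∉ {1, 3}`, then the flip count of `f` on `Ḡ` equals that on `G`: `f` does not
change sign across the added edge. -/
theorem flip_count_invariant_under_leaf_edge_insertion
    {α : Type*} [Fintype α] [DecidableEq α] (G : SimpleGraph α) [DecidableRel G.Adj]
    (a b u : α) (hab : a ≠ b)
    (ha : ∀ v, G.Adj a v ↔ v = u) (hb : ∀ v, G.Adj b v ↔ v = u)
    (f : α → ℝ) (hnz : ∀ i, f i ≠ 0) (lam : ℝ) (hlam1 : lam ≠ 1) (hlam3 : lam ≠ 3)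
    (heig : (G.lapMatrix ℝ).mulVec f = lam • f)
    (hsimple : ∀ g : α → ℝ, (G.lapMatrix ℝ).mulVec g = lam • g → ∃ c : ℝ, g = c • f) :
    flipCount (G ⊔ SimpleGraph.fromEdgeSet {s(a, b)}) f = flipCount G f ∧
    ¬ (f a * f b < 0) := by
  classical
  have hna : G.neighborFinset a = {u} := by ext v; simp [ha v]
  have hnb : G.neighborFinset b = {u} := by ext v; simp [hb v]
  have hda : G.degree a = 1 := by
    rw [← SimpleGraph.card_neighborFinset_eq_degree, hna]; simp
  have hdb : G.degree b = 1 := by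
    rw [← SimpleGraph.card_neighborFinset_eq_degree, hnb]; simp
  have heqa : (1 : ℝ) * f a - f u = lam * f a := by
    have := congrFun heig a
    rw [SimpleGraph.lapMatrix_mulVec_apply, hna, hda] at this
    simpa using this
  have heqb : (1 : ℝ) * f b - f u = lam * f b := by
    have := congrFun heig b
    rw [SimpleGraph.lapMatrix_mulVec_apply, hnb, hdb] at this
    simpa using this
  have hfab : f a = f b := by
    have h : (1 - lam) * f a = (1 - lam) * f b := by ring_nf; linarith
    have h' : (1 - lam) ≠ 0 := by intro h'; apply hlam1; linarith
    exact mul_left_cancel₀ h' h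
  have hpos : 0 < f a * f b := by
    rw [← hfab]; exact mul_self_pos.2 (hnz a)
  have hnlt : ¬ (f a * f b < 0) := not_lt.2 hpos.le
  refine ⟨?_, hnlt⟩
  unfold flipCount
  congr 1
  ext e
  simp only [Finset.mem_filter, SimpleGraph.mem_edgeFinset,
    SimpleGraph.edgeSet_sup, SimpleGraph.edgeSet_fromEdgeSet, Set.mem_union,
    Set.mem_diff, Set.mem_singleton_iff]
  constructor
  · rintro ⟨he, hp⟩
    rcases he with he | ⟨rfl, -⟩
    · exact ⟨he, hp⟩
    · exfalso; revert hp; simp [hnlt]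
  · rintro ⟨he, hp⟩
    exact ⟨Or.inl he, hp⟩
end

section
/- Let G be a simple graph with a 1-leaf-pair a, b adjacent to u, Ḡ the graph with edge (a,b) added, and f an eigenvector of L(G) with simple eigenvalue λ < 1, f nowhere zero, and f(a) = f(b). Then the number of nodal domains of f on Ḡ equals the number of nodal domains of f on G. -/
/-- If `a`, `b` form a 1-leaf-pair attached to `u` in `G`, `Ḡ` adds the
edge `(a,b)`, and `f` is a nowhere-zero eigenvector of `L(G)` with simple eigenvalue
`lam < 1` and `f a = f b`, then the nodal count of `f` on `Ḡ` equals that on `G`. -/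
theorem nodal_count_invariant_under_leaf_edge_insertion
    {α : Type*} [Fintype α] [DecidableEq α] (G : SimpleGraph α) [DecidableRel G.Adj]
    (a b u : α) (hab : a ≠ b)
    (ha : ∀ v, G.Adj a v ↔ v = u) (hb : ∀ v, G.Adj b v ↔ v = u)
    (f : α → ℝ) (hnz : ∀ i, f i ≠ 0) (lam : ℝ) (hlam : lam < 1)
    (heig : (G.lapMatrix ℝ).mulVec f = lam • f)
    (hsimple : ∀ g : α → ℝ, (G.lapMatrix ℝ).mulVec g = lam • g → ∃ c : ℝ, g = c • f)
    (hsym : f a = f b) :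
    nodalCount (G ⊔ SimpleGraph.fromEdgeSet {s(a, b)}) f = nodalCount G f := by
  classical
  set H : SimpleGraph α := signGraph G f with hH
  set H' : SimpleGraph α := signGraph (G ⊔ SimpleGraph.fromEdgeSet {s(a, b)}) f with hH'
  -- eigen-equation at a gives f u = (1 - lam) * f a
  have hNa : G.neighborFinset a = {u} := by ext v; simp [ha]
  have hdega : G.degree a = 1 := by rw [SimpleGraph.degree, hNa, Finset.card_singleton]
  have heqa' : (1 : ℝ) * f a - f u = lam * f a := by
    have := congrFun heig a
    rw [SimpleGraph.lapMatrix_mulVec_apply, hNa, hdega, Finset.sum_singleton] at this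
    simpa using this
  have hfu : f u = (1 - lam) * f a := by linarith
  have hpos_au : 0 < f a * f u := by
    rw [hfu]
    have h1 : (0:ℝ) < 1 - lam := by linarith
    nlinarith [sq_nonneg (f a), hnz a, mul_self_pos.mpr (hnz a)]
  have hpos_bu : 0 < f b * f u := by rw [← hsym]; exact hpos_au
  have hHau : H.Adj a u := ⟨(ha u).mpr rfl, hpos_au⟩
  have hHbu : H.Adj b u := ⟨(hb u).mpr rfl, hpos_bu⟩
  have hreach_ab : H.Reachable a b := (hHau.reachable).trans (hHbu.reachable).symm
  -- every edge of H' is realized by reachability in H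
  have key : ∀ x y, H'.Adj x y → H.Reachable x y := by
    rintro x y ⟨hadj, hpos⟩
    rcases hadj with hG | hE
    · exact SimpleGraph.Adj.reachable ⟨hG, hpos⟩
    · rcases hE with ⟨hmem, hne⟩
      rw [Sym2.toRel_prop, Set.mem_singleton_iff, Sym2.eq_iff] at hmem
      rcases hmem with ⟨rfl, rfl⟩ | ⟨rfl, rfl⟩
      · exact hreach_ab
      · exact hreach_ab.symm
  have key' : ∀ x y, H'.Reachable x y → H.Reachable x y := by
    intro x y h
    obtain ⟨w⟩ := h
    induction w with
    | nil => exact SimpleGraph.Reachable.refl _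
    | cons h p ih => exact (key _ _ h).trans ih
  have mono : ∀ x y, H.Reachable x y → H'.Reachable x y := by
    intro x y h
    obtain ⟨w⟩ := h
    induction w with
    | nil => exact SimpleGraph.Reachable.refl _
    | cons h p ih =>
      refine SimpleGraph.Reachable.trans ?_ ih
      exact SimpleGraph.Adj.reachable ⟨Or.inl h.1, h.2⟩
  have e : H'.ConnectedComponent ≃ H.ConnectedComponent :=
    { toFun := Quot.lift H.connectedComponentMk
        (fun x y h => SimpleGraph.ConnectedComponent.sound (key' x y h))
      invFun := Quot.lift H'.connectedComponentMk
        (fun x y h => SimpleGraph.ConnectedComponent.sound (mono x y h))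
      left_inv := by rintro ⟨v⟩; rfl
      right_inv := by rintro ⟨v⟩; rfl }
  exact Nat.card_congr e
end
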